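/- Let g, k, m ≥ 1 and let A^{(1)},…,A^{(m)} ∈ ℝ^{g×k} and b^{(1)},…,b^{(m)} ∈ ℝ^g satisfy: (i) every entry of every A^{(i)} is bounded in absolute value by c1, and (ii) ‖A^{(i)} ω − b^{(i)}‖₂² ≤ c2 for every i and every ω ∈ Δ_k. Let ε = (ε_1,…,ε_m) be uniformly distributed on {−1,1}^m. Then the empirical Rademacher complexity of the squared-loss class over the simplex satisfies (1/m) · E_ε[ sup_{ω ∈ Δ_k} Σ_{i=1}^m ε_i ‖A^{(i)} ω − b^{(i)}‖₂² ] ≤ 2 c1 √(2 g c2) · √(2 ln(2k) / m). -/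

import Mathlib

open Matrix BigOperators
open Finset

-- sum of a sign over all sign vectors is zero
lemma signSum (m : ℕ) (c : Fin m → ℝ) :
    ∑ ε : Fin m → Bool, ∑ i, (if ε i then (1:ℝ) else -1) * c i = 0 := by
  rw [Finset.sum_comm]
  refine Finset.sum_eq_zero fun i _ => ?_
  refine Finset.sum_involution (fun ε _ => Function.update ε i (!(ε i))) ?_ ?_ ?_ ?_
  · intro ε _
    simp only [Function.update_self]
    cases h : ε i <;> simp [h]
  · intro ε _ _
    intro hEq
    have := congrFun hEq i
    simp [Function.update_self] at this
  · intro ε _; exact Finset.mem_univ _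
  · intro ε _
    simp [Function.update_idem, Function.update_self, Function.update_eq_self]

lemma massart {m : ℕ} {ι : Type*} [Fintype ι] [Nonempty ι] (a : ι → Fin m → ℝ) (V : ℝ)
    (hV : ∀ j, ∑ i, (a j i)^2 ≤ V) :
    ∑ ε : Fin m → Bool, (Finset.univ.sup' Finset.univ_nonempty
        fun j => ∑ i, (if ε i then (1:ℝ) else -1) * a j i)
      ≤ 2^m * Real.sqrt (2 * V * Real.log (Fintype.card ι)) := by
  classical
  set σ : (Fin m → Bool) → Fin m → ℝ := fun ε i => if ε i then 1 else -1 with hσ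
  set X : (Fin m → Bool) → ι → ℝ := fun ε j => ∑ i, σ ε i * a j i with hX
  set M : (Fin m → Bool) → ℝ := fun ε => Finset.univ.sup' Finset.univ_nonempty (X ε) with hM
  have hrhs0 : 0 ≤ 2^m * Real.sqrt (2 * V * Real.log (Fintype.card ι)) := by positivity
  -- trivial case: card = 1
  by_cases hcard : Fintype.card ι = 1
  · obtain ⟨j₀, hj₀⟩ := Fintype.card_eq_one_iff.mp hcard
    have hMε : ∀ ε, M ε = X ε j₀ := by
      intro ε
      have h : ∀ j ∈ Finset.univ, X ε j = X ε j₀ := fun j _ => by rw [hj₀ j]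
      show Finset.univ.sup' Finset.univ_nonempty (X ε) = X ε j₀
      rw [Finset.sup'_congr Finset.univ_nonempty rfl h, Finset.sup'_const]
    calc ∑ ε : Fin m → Bool, M ε = ∑ ε : Fin m → Bool, ∑ i, σ ε i * a j₀ i := by
          exact Finset.sum_congr rfl fun ε _ => hMε ε
      _ = 0 := signSum m (a j₀)
      _ ≤ _ := hrhs0
  -- get 0 ≤ V
  have hV0 : 0 ≤ V := le_trans (by positivity) (hV (Classical.arbitrary ι))
  by_cases hVz : V = 0
  · have ha0 : ∀ j i, a j i = 0 := by
      intro j i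
      have h1 : ∑ i, (a j i)^2 ≤ 0 := by rw [← hVz]; exact hV j
      have hz : ∑ i, (a j i)^2 = 0 := le_antisymm h1 (by positivity)
      have h2 : (a j i)^2 = 0 :=
        (Finset.sum_eq_zero_iff_of_nonneg (fun i _ => sq_nonneg (a j i))).mp hz i (Finset.mem_univ i)
      exact pow_eq_zero_iff two_ne_zero |>.mp h2
    have hMε : ∀ ε, M ε = 0 := by
      intro ε
      have h : ∀ j ∈ Finset.univ, X ε j = 0 := by
        intro j _; rw [hX]; simp [ha0]
      show Finset.univ.sup' Finset.univ_nonempty (X ε) = 0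
      rw [Finset.sup'_congr Finset.univ_nonempty rfl h, Finset.sup'_const]
    simp only [hMε, Finset.sum_const, smul_zero]
    exact hrhs0
  -- main case
  have hVpos : 0 < V := lt_of_le_of_ne hV0 (Ne.symm hVz)
  have hcard1 : 1 ≤ Fintype.card ι := Fintype.card_pos
  have hcard2 : 2 ≤ Fintype.card ι := by omega
  set L : ℝ := Real.log (Fintype.card ι) with hLdef
  have hLpos : 0 < L := Real.log_pos (by exact_mod_cast hcard2)
  set s : ℝ := Real.sqrt (2 * L / V) with hsdef
  have hspos : 0 < s := Real.sqrt_pos.mpr (by positivity)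
  have hs2 : s^2 = 2 * L / V := Real.sq_sqrt (by positivity)
  -- MGF bound for each j
  have mgf : ∀ j, ∑ ε : Fin m → Bool, Real.exp (s * X ε j)
      ≤ 2^m * Real.exp (s^2 * V / 2) := by
    intro j
    have e1 : ∀ ε : Fin m → Bool, Real.exp (s * X ε j)
        = ∏ i, Real.exp (s * (σ ε i * a j i)) := by
      intro ε
      rw [← Real.exp_sum, hX]
      simp [Finset.mul_sum]
    have e2 : ∑ ε : Fin m → Bool, ∏ i, Real.exp (s * (σ ε i * a j i))
        = ∏ i, (Real.exp (s * a j i) + Real.exp (-(s * a j i))) := by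
      rw [← Fintype.prod_sum (fun i (b : Bool) => Real.exp (s * ((if b then (1:ℝ) else -1) * a j i)))]
      refine Finset.prod_congr rfl fun i _ => ?_
      rw [Fintype.sum_bool]
      simp [mul_comm, mul_assoc]
    have e3 : ∏ i, (Real.exp (s * a j i) + Real.exp (-(s * a j i)))
        ≤ ∏ i, (2 * Real.exp ((s * a j i)^2 / 2)) := by
      refine Finset.prod_le_prod (fun i _ => by positivity) (fun i _ => ?_)
      have := Real.cosh_le_exp_half_sq (s * a j i)
      rw [Real.cosh_eq] at this
      linarith [this]
    have e4 : ∏ i, (2 * Real.exp ((s * a j i)^2 / 2))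
        = 2^m * Real.exp (∑ i, (s * a j i)^2 / 2) := by
      rw [Finset.prod_mul_distrib, Finset.prod_const, Real.exp_sum]
      simp
    have e5 : ∑ i, (s * a j i)^2 / 2 ≤ s^2 * V / 2 := by
      have : ∑ i, (s * a j i)^2 / 2 = s^2 * (∑ i, (a j i)^2) / 2 := by
        rw [Finset.mul_sum, Finset.sum_div]
        refine Finset.sum_congr rfl fun i _ => by ring
      rw [this]
      have := hV j
      nlinarith [sq_nonneg s]
    calc ∑ ε : Fin m → Bool, Real.exp (s * X ε j)
        = ∑ ε : Fin m → Bool, ∏ i, Real.exp (s * (σ ε i * a j i)) :=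
          Finset.sum_congr rfl fun ε _ => e1 ε
      _ = ∏ i, (Real.exp (s * a j i) + Real.exp (-(s * a j i))) := e2
      _ ≤ ∏ i, (2 * Real.exp ((s * a j i)^2 / 2)) := e3
      _ = 2^m * Real.exp (∑ i, (s * a j i)^2 / 2) := e4
      _ ≤ 2^m * Real.exp (s^2 * V / 2) :=
          mul_le_mul_of_nonneg_left (Real.exp_le_exp.mpr e5) (by positivity)
  -- T bound
  set N : ℕ := Fintype.card ι with hNdef
  set T : ℝ := ∑ ε : Fin m → Bool, Real.exp (s * M ε) with hTdef
  have hTle : T ≤ N * (2^m * Real.exp (s^2 * V / 2)) := by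
    have step : ∀ ε : Fin m → Bool, Real.exp (s * M ε) ≤ ∑ j, Real.exp (s * X ε j) := by
      intro ε
      obtain ⟨j₁, _, hj₁⟩ := Finset.exists_mem_eq_sup' (Finset.univ_nonempty (α := ι)) (X ε)
      have hMX : M ε = X ε j₁ := hj₁
      rw [hMX]
      exact Finset.single_le_sum (f := fun j => Real.exp (s * X ε j))
        (fun j _ => (Real.exp_pos _).le) (Finset.mem_univ j₁)
    calc T ≤ ∑ ε : Fin m → Bool, ∑ j, Real.exp (s * X ε j) :=
          Finset.sum_le_sum fun ε _ => step ε
      _ = ∑ j, ∑ ε : Fin m → Bool, Real.exp (s * X ε j) := Finset.sum_comm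
      _ ≤ ∑ (_ : ι), 2^m * Real.exp (s^2 * V / 2) := Finset.sum_le_sum fun j _ => mgf j
      _ = N * (2^m * Real.exp (s^2 * V / 2)) := by
          rw [Finset.sum_const, nsmul_eq_mul]; rfl
  have hTpos : 0 < T := Finset.sum_pos (fun ε _ => Real.exp_pos _) Finset.univ_nonempty
  have h2m : (0:ℝ) < 2^m := by positivity
  -- Jensen via x + 1 ≤ exp x
  set c : ℝ := Real.log (T / 2^m) with hcdef
  have hsum : s * (∑ ε : Fin m → Bool, M ε) ≤ 2^m * c := by
    have key : ∀ ε : Fin m → Bool, s * M ε ≤ Real.exp (s * M ε - c) - 1 + c := by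
      intro ε
      have := Real.add_one_le_exp (s * M ε - c)
      linarith
    have hsum1 : ∑ ε : Fin m → Bool, (Real.exp (s * M ε - c) - 1 + c)
        = Real.exp (-c) * T + 2^m * (c - 1) := by
      have : ∀ ε : Fin m → Bool, Real.exp (s * M ε - c) - 1 + c
          = Real.exp (-c) * Real.exp (s * M ε) + (c - 1) := by
        intro ε
        rw [Real.exp_sub, Real.exp_neg]
        ring
      rw [Finset.sum_congr rfl fun ε _ => this ε, Finset.sum_add_distrib, ← Finset.mul_sum,
        Finset.sum_const, nsmul_eq_mul]
      simp [hTdef]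
    have hexpc : Real.exp (-c) * T = 2^m := by
      rw [hcdef, Real.exp_neg, Real.exp_log (by positivity)]
      field_simp
    calc s * (∑ ε : Fin m → Bool, M ε) = ∑ ε : Fin m → Bool, s * M ε := Finset.mul_sum _ _ _
      _ ≤ ∑ ε : Fin m → Bool, (Real.exp (s * M ε - c) - 1 + c) :=
          Finset.sum_le_sum fun ε _ => key ε
      _ = Real.exp (-c) * T + 2^m * (c - 1) := hsum1
      _ = 2^m * c := by rw [hexpc]; ring
  have hcle : c ≤ 2 * L := by
    have h1 : T / 2^m ≤ N * Real.exp (s^2 * V / 2) := by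
      rw [div_le_iff₀ h2m]
      calc T ≤ N * (2^m * Real.exp (s^2 * V / 2)) := hTle
        _ = N * Real.exp (s^2 * V / 2) * 2^m := by ring
    have h2 : c ≤ Real.log (N * Real.exp (s^2 * V / 2)) :=
      Real.log_le_log (by positivity) h1
    have h3 : Real.log ((N:ℝ) * Real.exp (s^2 * V / 2)) = L + s^2 * V / 2 := by
      rw [Real.log_mul (by positivity) (Real.exp_ne_zero _), Real.log_exp]
    have h4 : s^2 * V / 2 = L := by
      rw [hs2]; field_simp
    rw [h3, h4] at h2
    linarith
  have hfin : (∑ ε : Fin m → Bool, M ε) ≤ 2^m * (2 * L / s) := by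
    have h5 : s * (∑ ε : Fin m → Bool, M ε) ≤ 2^m * (2 * L) :=
      le_trans hsum (mul_le_mul_of_nonneg_left hcle (by positivity))
    calc (∑ ε : Fin m → Bool, M ε) = (s * (∑ ε : Fin m → Bool, M ε)) / s := by
          field_simp
      _ ≤ (2^m * (2 * L)) / s := (div_le_div_iff_of_pos_right hspos).mpr h5
      _ = 2^m * (2 * L / s) := by ring
  have hsql : 2 * L / s = Real.sqrt (2 * V * L) := by
    rw [hsdef]
    rw [eq_comm, eq_div_iff (ne_of_gt hspos), hsdef]
    rw [← Real.sqrt_mul (by positivity)]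
    have : 2 * V * L * (2 * L / V) = (2*L)^2 := by field_simp
    rw [this, Real.sqrt_sq (by positivity)]
  calc (∑ ε : Fin m → Bool, M ε) ≤ 2^m * (2 * L / s) := hfin
    _ = 2^m * Real.sqrt (2 * V * L) := by rw [hsql]

lemma finCS {g : ℕ} (x y : Fin g → ℝ) :
    ∑ r, x r * y r ≤ Real.sqrt (∑ r, (x r)^2) * Real.sqrt (∑ r, (y r)^2) := by
  calc ∑ r, x r * y r ≤ |∑ r, x r * y r| := le_abs_self _
    _ = Real.sqrt ((∑ r, x r * y r)^2) := (Real.sqrt_sq_eq_abs _).symm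
    _ ≤ Real.sqrt ((∑ r, (x r)^2) * ∑ r, (y r)^2) :=
        Real.sqrt_le_sqrt (Finset.sum_mul_sq_le_sq_mul_sq Finset.univ x y)
    _ = _ := Real.sqrt_mul (Finset.sum_nonneg fun r _ => sq_nonneg _) _


/-- Bound on the empirical Rademacher complexity of the squared-loss class over the
simplex (step (2) in the proof of Theorem 4.3):
`(1/m) E_ε[sup_{ω ∈ Δ_k} ∑ i, ε i ‖A⁽ⁱ⁾ω - b⁽ⁱ⁾‖₂²] ≤ 2 c1 √(2 g c2) √(2 ln(2k)/m)`. -/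
theorem stmt13 (g k m : ℕ) (hg : 1 ≤ g) (hk : 1 ≤ k) (hm : 1 ≤ m) (c1 c2 : ℝ)
    (A : Fin m → Matrix (Fin g) (Fin k) ℝ) (b : Fin m → Fin g → ℝ)
    (hA : ∀ i r j, |A i r j| ≤ c1)
    (hb : ∀ i, ∀ ω : Fin k → ℝ, (∀ l, 0 ≤ ω l) → (∑ l, ω l = 1) →
      ∑ r, ((A i).mulVec ω r - b i r) ^ 2 ≤ c2) :
    (1 / m) * ((∑ ε : Fin m → Bool,
        sSup {x : ℝ | ∃ ω : Fin k → ℝ, (∀ l, 0 ≤ ω l) ∧ (∑ l, ω l = 1) ∧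
          x = ∑ i, (if ε i then (1 : ℝ) else -1) * ∑ r, ((A i).mulVec ω r - b i r) ^ 2}) / 2 ^ m)
      ≤ 2 * c1 * Real.sqrt (2 * g * c2) * Real.sqrt (2 * Real.log (2 * k) / m) := by
  classical
  haveI : Nonempty (Fin m) := ⟨⟨0, by omega⟩⟩
  haveI : Nonempty (Fin k) := ⟨⟨0, by omega⟩⟩
  haveI : Nonempty (Fin g) := ⟨⟨0, by omega⟩⟩
  set u : Fin m → Fin k → Fin g → ℝ := fun i j r => A i r j - b i r with hudef
  set q : (Fin k × Fin k) → Fin m → ℝ := fun p i => ∑ r, u i p.1 r * u i p.2 r with hqdef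
  have npe : (Finset.univ : Finset (Fin k × Fin k)).Nonempty := Finset.univ_nonempty
  -- vertex simplex membership
  set vtx : Fin k → Fin k → ℝ := fun j l => if l = j then 1 else 0 with hvtxdef
  have hvx : ∀ j : Fin k, (∀ l, 0 ≤ vtx j l) ∧ (∑ l, vtx j l = 1) := by
    intro j
    constructor
    · intro l
      rcases eq_or_ne l j with h | h <;> simp [hvtxdef, h]
    · simp [hvtxdef]
  -- vertex bound
  have hvert : ∀ i j, ∑ r, (u i j r)^2 ≤ c2 := by
    intro i j
    have h := hb i (vtx j) (hvx j).1 (hvx j).2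
    have hmv : ∀ r, (A i).mulVec (vtx j) r = A i r j := by
      intro r
      simp [Matrix.mulVec, dotProduct, hvtxdef]
    calc ∑ r, (u i j r)^2 = ∑ r, ((A i).mulVec (vtx j) r - b i r)^2 :=
          Finset.sum_congr rfl fun r _ => by rw [hmv r]
      _ ≤ c2 := h
  have hc2 : 0 ≤ c2 :=
    le_trans (Finset.sum_nonneg fun r _ => sq_nonneg _)
      (hvert (Classical.arbitrary _) (Classical.arbitrary _))
  have hc1 : 0 ≤ c1 :=
    le_trans (abs_nonneg _) (hA (Classical.arbitrary _) (Classical.arbitrary _) (Classical.arbitrary _))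
  -- column difference bound
  have hcol : ∀ i (j j' : Fin k), ∑ r, (u i j r - u i j' r)^2 ≤ (g : ℝ) * (2*c1)^2 := by
    intro i j j'
    have : ∀ r : Fin g, (u i j r - u i j' r)^2 ≤ (2*c1)^2 := by
      intro r
      have h1 : |u i j r - u i j' r| ≤ 2*c1 := by
        have := hA i r j
        have := hA i r j'
        rw [hudef]
        simp only
        rw [show A i r j - b i r - (A i r j' - b i r) = A i r j - A i r j' by ring]
        calc |A i r j - A i r j'| ≤ |A i r j| + |A i r j'| := abs_sub _ _
          _ ≤ 2*c1 := by linarith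
      calc (u i j r - u i j' r)^2 = |u i j r - u i j' r|^2 := (sq_abs _).symm
        _ ≤ (2*c1)^2 := by nlinarith [abs_nonneg (u i j r - u i j' r)]
    calc ∑ r, (u i j r - u i j' r)^2 ≤ ∑ (_ : Fin g), (2*c1)^2 :=
          Finset.sum_le_sum fun r _ => this r
      _ = (g:ℝ) * (2*c1)^2 := by rw [Finset.sum_const]; simp [nsmul_eq_mul]
  -- spread bound
  set B : ℝ := Real.sqrt ((g:ℝ) * (2*c1)^2) * Real.sqrt c2 with hBdef
  have hB0 : 0 ≤ B := by positivity
  have hspread : ∀ i (p p' : Fin k × Fin k), q p i - q p' i ≤ 2 * B := by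
    intro i p p'
    have hsplit : q p i - q p' i
        = (∑ r, (u i p.1 r - u i p'.1 r) * u i p.2 r)
          + ∑ r, u i p'.1 r * (u i p.2 r - u i p'.2 r) := by
      rw [hqdef]
      simp only
      rw [← Finset.sum_add_distrib, ← Finset.sum_sub_distrib]
      exact Finset.sum_congr rfl fun r _ => by ring
    have t1 : (∑ r, (u i p.1 r - u i p'.1 r) * u i p.2 r) ≤ B := by
      calc _ ≤ Real.sqrt (∑ r, (u i p.1 r - u i p'.1 r)^2) * Real.sqrt (∑ r, (u i p.2 r)^2) :=
            finCS _ _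
        _ ≤ B := by
            rw [hBdef]
            exact mul_le_mul (Real.sqrt_le_sqrt (hcol i _ _)) (Real.sqrt_le_sqrt (hvert i _))
              (Real.sqrt_nonneg _) (Real.sqrt_nonneg _)
    have t2 : (∑ r, u i p'.1 r * (u i p.2 r - u i p'.2 r)) ≤ B := by
      calc _ ≤ Real.sqrt (∑ r, (u i p'.1 r)^2) * Real.sqrt (∑ r, (u i p.2 r - u i p'.2 r)^2) :=
            finCS _ _
        _ ≤ B := by
            rw [hBdef, mul_comm (Real.sqrt ((g:ℝ) * (2*c1)^2))]
            exact mul_le_mul (Real.sqrt_le_sqrt (hvert i _)) (Real.sqrt_le_sqrt (hcol i _ _))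
              (Real.sqrt_nonneg _) (Real.sqrt_nonneg _)
    linarith [hsplit, t1, t2]
  -- centered coefficients
  set rmid : Fin m → ℝ := fun i =>
    ((Finset.univ.sup' npe fun p => q p i) + (Finset.univ.inf' npe fun p => q p i)) / 2 with hrmiddef
  set a : (Fin k × Fin k) → Fin m → ℝ := fun p i => q p i - rmid i with hadef
  set V : ℝ := (m:ℝ) * B^2 with hVdef
  have ha2 : ∀ p, ∑ i, (a p i)^2 ≤ V := by
    intro p
    have hper : ∀ i : Fin m, (a p i)^2 ≤ B^2 := by
      intro i
      have hle : q p i ≤ Finset.univ.sup' npe fun p => q p i :=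
        Finset.le_sup' (fun p => q p i) (Finset.mem_univ p)
      have hge : (Finset.univ.inf' npe fun p => q p i) ≤ q p i :=
        Finset.inf'_le (fun p => q p i) (Finset.mem_univ p)
      have hdiff : (Finset.univ.sup' npe fun p => q p i)
          - (Finset.univ.inf' npe fun p => q p i) ≤ 2 * B := by
        obtain ⟨p1, _, hp1⟩ := Finset.exists_mem_eq_sup' npe (fun p => q p i)
        obtain ⟨p2, _, hp2⟩ := Finset.exists_mem_eq_inf' npe (fun p => q p i)
        rw [hp1, hp2]
        exact hspread i p1 p2
      have h1 : a p i ≤ B := by rw [hadef]; simp only; rw [hrmiddef]; simp only; linarith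
      have h2 : -B ≤ a p i := by rw [hadef]; simp only; rw [hrmiddef]; simp only; linarith
      exact sq_le_sq' h2 h1
    calc ∑ i, (a p i)^2 ≤ ∑ (_ : Fin m), B^2 := Finset.sum_le_sum fun i _ => hper i
      _ = V := by rw [Finset.sum_const, hVdef]; simp [nsmul_eq_mul]
  -- Massart
  have Mas := massart (ι := Fin k × Fin k) a V ha2
  -- pointwise sSup bound
  have hsup : ∀ ε : Fin m → Bool,
      sSup {x : ℝ | ∃ ω : Fin k → ℝ, (∀ l, 0 ≤ ω l) ∧ (∑ l, ω l = 1) ∧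
        x = ∑ i, (if ε i then (1 : ℝ) else -1) * ∑ r, ((A i).mulVec ω r - b i r) ^ 2}
      ≤ (Finset.univ.sup' npe fun p => ∑ i, (if ε i then (1:ℝ) else -1) * a p i)
        + ∑ i, (if ε i then (1:ℝ) else -1) * rmid i := by
    intro ε
    apply csSup_le
    · exact ⟨_, ⟨vtx (Classical.arbitrary (Fin k)), (hvx _).1, (hvx _).2, rfl⟩⟩
    · rintro x ⟨ω, hω0, hω1, rfl⟩
      have hkey : ∀ i, ∑ r, ((A i).mulVec ω r - b i r)^2
          = ∑ p : Fin k × Fin k, (ω p.1 * ω p.2) * q p i := by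
        intro i
        have h1 : ∀ r, (A i).mulVec ω r - b i r = ∑ j, ω j * u i j r := by
          intro r
          have h2 : ∑ j, ω j * u i j r = (∑ j, A i r j * ω j) - (∑ j, ω j) * b i r := by
            rw [Finset.sum_mul, ← Finset.sum_sub_distrib]
            exact Finset.sum_congr rfl fun j _ => by rw [hudef]; ring
          rw [h2, hω1, one_mul]
          simp [Matrix.mulVec, dotProduct]
        calc ∑ r, ((A i).mulVec ω r - b i r)^2
            = ∑ r, ∑ j, ∑ l, (ω j * u i j r) * (ω l * u i l r) := by
              refine Finset.sum_congr rfl fun r _ => ?_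
              rw [h1 r, sq, Finset.sum_mul_sum]
          _ = ∑ j, ∑ l, ∑ r, (ω j * u i j r) * (ω l * u i l r) := by
              rw [Finset.sum_comm]
              exact Finset.sum_congr rfl fun j _ => Finset.sum_comm
          _ = ∑ j, ∑ l, (ω j * ω l) * ∑ r, u i j r * u i l r := by
              refine Finset.sum_congr rfl fun j _ => Finset.sum_congr rfl fun l _ => ?_
              rw [Finset.mul_sum]
              exact Finset.sum_congr rfl fun r _ => by ring
          _ = ∑ p : Fin k × Fin k, (ω p.1 * ω p.2) * q p i := by
              rw [Fintype.sum_prod_type]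
      have e1 : ∑ i, (if ε i then (1:ℝ) else -1) * ∑ r, ((A i).mulVec ω r - b i r)^2
          = ∑ p : Fin k × Fin k, (ω p.1 * ω p.2) * ∑ i, (if ε i then (1:ℝ) else -1) * q p i := by
        calc ∑ i, (if ε i then (1:ℝ) else -1) * ∑ r, ((A i).mulVec ω r - b i r)^2
            = ∑ i, (if ε i then (1:ℝ) else -1) * ∑ p : Fin k × Fin k, (ω p.1 * ω p.2) * q p i :=
              Finset.sum_congr rfl fun i _ => by rw [hkey i]
          _ = ∑ i, ∑ p : Fin k × Fin k, (ω p.1 * ω p.2) * ((if ε i then (1:ℝ) else -1) * q p i) := by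
              refine Finset.sum_congr rfl fun i _ => ?_
              rw [Finset.mul_sum]
              exact Finset.sum_congr rfl fun p _ => by ring
          _ = ∑ p : Fin k × Fin k, ∑ i, (ω p.1 * ω p.2) * ((if ε i then (1:ℝ) else -1) * q p i) :=
              Finset.sum_comm
          _ = _ := Finset.sum_congr rfl fun p _ => by rw [Finset.mul_sum]
      have e2 : ∀ p : Fin k × Fin k, ∑ i, (if ε i then (1:ℝ) else -1) * q p i
          = (∑ i, (if ε i then (1:ℝ) else -1) * a p i)
            + ∑ i, (if ε i then (1:ℝ) else -1) * rmid i := by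
        intro p
        rw [← Finset.sum_add_distrib]
        refine Finset.sum_congr rfl fun i _ => ?_
        rw [hadef]
        ring
      have e3 : ∑ p : Fin k × Fin k, (ω p.1 * ω p.2) = 1 := by
        rw [Fintype.sum_prod_type, ← Finset.sum_mul_sum, hω1, one_mul]
      set R : ℝ := ∑ i, (if ε i then (1:ℝ) else -1) * rmid i with hRdef
      set MS : ℝ := Finset.univ.sup' npe fun p => ∑ i, (if ε i then (1:ℝ) else -1) * a p i with hMSdef
      calc ∑ i, (if ε i then (1:ℝ) else -1) * ∑ r, ((A i).mulVec ω r - b i r)^2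
          = ∑ p : Fin k × Fin k, (ω p.1 * ω p.2) *
              ((∑ i, (if ε i then (1:ℝ) else -1) * a p i) + R) := by
            rw [e1]
            exact Finset.sum_congr rfl fun p _ => by rw [e2 p]
        _ = (∑ p : Fin k × Fin k, (ω p.1 * ω p.2) * (∑ i, (if ε i then (1:ℝ) else -1) * a p i))
            + (∑ p : Fin k × Fin k, (ω p.1 * ω p.2)) * R := by
            rw [Finset.sum_mul, ← Finset.sum_add_distrib]
            exact Finset.sum_congr rfl fun p _ => by ring
        _ ≤ (∑ p : Fin k × Fin k, (ω p.1 * ω p.2) * MS) + (∑ p : Fin k × Fin k, (ω p.1 * ω p.2)) * R := by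
            refine add_le_add (Finset.sum_le_sum fun p _ => ?_) le_rfl
            exact mul_le_mul_of_nonneg_left
              (Finset.le_sup' (fun p => ∑ i, (if ε i then (1:ℝ) else -1) * a p i) (Finset.mem_univ p))
              (mul_nonneg (hω0 _) (hω0 _))
        _ = MS + R := by rw [← Finset.sum_mul, e3, one_mul, one_mul]
  -- sum over ε
  have htot : (∑ ε : Fin m → Bool,
      sSup {x : ℝ | ∃ ω : Fin k → ℝ, (∀ l, 0 ≤ ω l) ∧ (∑ l, ω l = 1) ∧
        x = ∑ i, (if ε i then (1 : ℝ) else -1) * ∑ r, ((A i).mulVec ω r - b i r) ^ 2})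
      ≤ 2^m * Real.sqrt (2 * V * Real.log (Fintype.card (Fin k × Fin k))) := by
    calc _ ≤ ∑ ε : Fin m → Bool,
          ((Finset.univ.sup' npe fun p => ∑ i, (if ε i then (1:ℝ) else -1) * a p i)
            + ∑ i, (if ε i then (1:ℝ) else -1) * rmid i) := Finset.sum_le_sum fun ε _ => hsup ε
      _ = (∑ ε : Fin m → Bool,
            (Finset.univ.sup' npe fun p => ∑ i, (if ε i then (1:ℝ) else -1) * a p i))
          + ∑ ε : Fin m → Bool, ∑ i, (if ε i then (1:ℝ) else -1) * rmid i :=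
          Finset.sum_add_distrib
      _ = (∑ ε : Fin m → Bool,
            (Finset.univ.sup' npe fun p => ∑ i, (if ε i then (1:ℝ) else -1) * a p i)) + 0 := by
          rw [signSum m rmid]
      _ ≤ 2^m * Real.sqrt (2 * V * Real.log (Fintype.card (Fin k × Fin k))) := by
          rw [add_zero]
          exact Mas
  -- final arithmetic
  have hmpos : (0:ℝ) < m := by exact_mod_cast hm
  have h2m : (0:ℝ) < 2^m := by positivity
  have hkpos : (0:ℝ) < k := by exact_mod_cast hk
  have hcard : (Fintype.card (Fin k × Fin k) : ℝ) = (k:ℝ) * k := by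
    simp [Fintype.card_prod]
  have hlogk0 : 0 ≤ Real.log k := Real.log_nonneg (by exact_mod_cast hk)
  have hlogkk : Real.log ((Fintype.card (Fin k × Fin k) : ℝ)) = 2 * Real.log k := by
    rw [hcard, Real.log_mul (ne_of_gt hkpos) (ne_of_gt hkpos)]
    ring
  have hloglek : Real.log k ≤ Real.log (2*k) :=
    Real.log_le_log hkpos (by linarith)
  have hB2 : B^2 = (g:ℝ) * (2*c1)^2 * c2 := by
    rw [hBdef, mul_pow, Real.sq_sqrt (by positivity), Real.sq_sqrt hc2]
  have hrad : 2 * V * Real.log ((Fintype.card (Fin k × Fin k) : ℝ))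
      = (m:ℝ) * (16 * c1^2 * g * c2 * Real.log k) := by
    rw [hlogkk, hVdef, hB2]
    ring
  calc (1 / (m:ℝ)) * ((∑ ε : Fin m → Bool,
        sSup {x : ℝ | ∃ ω : Fin k → ℝ, (∀ l, 0 ≤ ω l) ∧ (∑ l, ω l = 1) ∧
          x = ∑ i, (if ε i then (1 : ℝ) else -1) * ∑ r, ((A i).mulVec ω r - b i r) ^ 2}) / 2 ^ m)
      ≤ (1 / (m:ℝ)) * ((2^m * Real.sqrt (2 * V * Real.log (Fintype.card (Fin k × Fin k)))) / 2^m) := by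
        refine mul_le_mul_of_nonneg_left ?_ (by positivity)
        exact (div_le_div_iff_of_pos_right h2m).mpr htot
    _ = (1 / (m:ℝ)) * Real.sqrt (2 * V * Real.log (Fintype.card (Fin k × Fin k))) := by
        rw [mul_div_assoc]
        congr 1
        field_simp
    _ = Real.sqrt ((1/(m:ℝ))^2 * (2 * V * Real.log (Fintype.card (Fin k × Fin k)))) := by
        rw [Real.sqrt_mul (show (0:ℝ) ≤ (1/(m:ℝ))^2 by positivity)
            (2 * V * Real.log (Fintype.card (Fin k × Fin k))),
          Real.sqrt_sq (show (0:ℝ) ≤ 1/(m:ℝ) by positivity)]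
    _ ≤ Real.sqrt ((2*c1)^2 * (2*(g:ℝ)*c2) * (2*Real.log (2*(k:ℝ))/(m:ℝ))) := by
        apply Real.sqrt_le_sqrt
        rw [hrad]
        calc (1/(m:ℝ))^2 * ((m:ℝ) * (16 * c1^2 * g * c2 * Real.log k))
            = (16*c1^2*(g:ℝ)*c2/(m:ℝ)) * Real.log k := by
              field_simp
          _ ≤ (16*c1^2*(g:ℝ)*c2/(m:ℝ)) * Real.log (2*(k:ℝ)) :=
              mul_le_mul_of_nonneg_left hloglek (by positivity)
          _ = (2*c1)^2 * (2*(g:ℝ)*c2) * (2*Real.log (2*(k:ℝ))/(m:ℝ)) := by ring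
    _ = 2 * c1 * Real.sqrt (2 * g * c2) * Real.sqrt (2 * Real.log (2 * k) / m) := by
        rw [Real.sqrt_mul (show (0:ℝ) ≤ (2*c1)^2 * (2*(g:ℝ)*c2) by positivity)
            (2*Real.log (2*(k:ℝ))/(m:ℝ)),
          Real.sqrt_mul (show (0:ℝ) ≤ (2*c1)^2 by positivity) (2*(g:ℝ)*c2),
          Real.sqrt_sq (show (0:ℝ) ≤ 2*c1 by positivity)]
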